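/- Invertibility of (@L): for all nominals i,j, every node expression φ, and all finite sets Γ,Δ of node expressions of the admissible forms, if @_j@_iφ, Γ ⊢_G Δ then @_iφ, Γ ⊢_G Δ. -/

import Mathlib

namespace HXPathD

mutual
  inductive Path (P N M C : Type) : Type where
    | mod  : M → Path P N M C
    | nom  : N → Path P N M C
    | test : Node P N M C → Path P N M C
    | comp : Path P N M C → Path P N M C → Path P N M C

  inductive Node (P N M C : Type) : Type where
    | prop : P → Node P N M C
    | nom  : N → Node P N M C
    | bot  : Node P N M C
    | impl : Node P N M C → Node P N M C → Node P N M C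
    | at   : N → Node P N M C → Node P N M C
    | dia  : M → Node P N M C → Node P N M C
    | eq   : Path P N M C → C → Path P N M C → Node P N M C
    | neq  : Path P N M C → C → Path P N M C → Node P N M C
end

variable {P N M C : Type}

/-- Abbreviations. -/
def Node.neg (φ : Node P N M C) : Node P N M C := .impl φ .bot
def Node.top : Node P N M C := .impl .bot .bot
def Node.and (φ ψ : Node P N M C) : Node P N M C := .neg (.impl φ (.neg ψ))
def Node.iff (φ ψ : Node P N M C) : Node P N M C := .and (.impl φ ψ) (.impl ψ φ)
def Node.box (a : M) (φ : Node P N M C) : Node P N M C := .neg (.dia a (.neg φ))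
def Path.eps : Path P N M C := .test .top

/-- The node expression ⟨α⟩φ, obtained by the abbreviations
    ⟨j:⟩φ := @_jφ, ⟨ψ?⟩φ := ψ∧φ, ⟨αβ⟩φ := ⟨α⟩⟨β⟩φ (with ⟨a⟩φ primitive). -/
def Path.dia : Path P N M C → Node P N M C → Node P N M C
  | .mod a, φ => .dia a φ
  | .nom j, φ => .at j φ
  | .test ψ, φ => .and ψ φ
  | .comp α β, φ => α.dia (β.dia φ)

/-- A comparison ▲ ∈ {=_c, ≠_c : c ∈ Cmp}. -/
inductive Comparison (C : Type) : Type where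
  | ceq  : C → Comparison C
  | cneq : C → Comparison C

/-- The node expression ⟨α ▲ β⟩. -/
def Comparison.node : Comparison C → Path P N M C → Path P N M C → Node P N M C
  | .ceq c, α, β => .eq α c β
  | .cneq c, α, β => .neq α c β

/-- A hybrid data model. -/
structure Model (P N M C : Type) where
  W : Type
  nonempty : Nonempty W
  R : M → W → W → Prop
  E : C → W → W → Prop
  E_equiv : ∀ c, Equivalence (E c)
  g : N → W
  V : P → W → Prop

mutual
  def Model.satPath (𝔐 : Model P N M C) : Path P N M C → 𝔐.W → 𝔐.W → Prop
    | .mod a, n, n' => 𝔐.R a n n'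
    | .nom i, _, n' => 𝔐.g i = n'
    | .test φ, n, n' => n = n' ∧ 𝔐.sat φ n
    | .comp α β, n, n' => ∃ n'', 𝔐.satPath α n n'' ∧ 𝔐.satPath β n'' n'

  def Model.sat (𝔐 : Model P N M C) : Node P N M C → 𝔐.W → Prop
    | .prop p, n => 𝔐.V p n
    | .nom i, n => 𝔐.g i = n
    | .bot, _ => False
    | .impl φ ψ, n => 𝔐.sat φ n → 𝔐.sat ψ n
    | .at i φ, _ => 𝔐.sat φ (𝔐.g i)
    | .dia a φ, n => ∃ n', 𝔐.R a n n' ∧ 𝔐.sat φ n'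
    | .eq α c β, n => ∃ n' n'', 𝔐.satPath α n n' ∧ 𝔐.satPath β n n'' ∧ 𝔐.E c n' n''
    | .neq α c β, n => ∃ n' n'', 𝔐.satPath α n n' ∧ 𝔐.satPath β n n'' ∧ ¬ 𝔐.E c n' n''
end

mutual
  def Path.noms : Path P N M C → Set N
    | .mod _ => ∅
    | .nom i => {i}
    | .test φ => φ.noms
    | .comp α β => α.noms ∪ β.noms

  def Node.noms : Node P N M C → Set N
    | .prop _ => ∅
    | .nom i => {i}
    | .bot => ∅
    | .impl φ ψ => φ.noms ∪ ψ.noms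
    | .at i φ => insert i φ.noms
    | .dia _ φ => φ.noms
    | .eq α _ β => α.noms ∪ β.noms
    | .neq α _ β => α.noms ∪ β.noms
end

/-- Node expressions of the admissible forms for sequents:
    ⟨i: ▲ j:⟩ or @_iφ. -/
def Node.Admissible : Node P N M C → Prop
  | .at _ _ => True
  | .eq (.nom _) _ (.nom _) => True
  | .neq (.nom _) _ (.nom _) => True
  | _ => False

/-- A sequent: antecedent and consequent. -/
abbrev Sequent (P N M C : Type) := Set (Node P N M C) × Set (Node P N M C)

/-- The nominal `j` does not occur in the set `S`. -/
def FreshIn (j : N) (S : Set (Node P N M C)) : Prop := ∀ φ ∈ S, j ∉ φ.noms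

/-- Shape restriction on the axiom (Ax). -/
inductive AxForm : Node P N M C → Prop where
  | prop (i : N) (p : P) : AxForm (.at i (.prop p))
  | nom (i j : N) : AxForm (.at i (.nom j))
  | eq (i : N) (c : C) (j : N) : AxForm (.eq (.nom i) c (.nom j))

/-- Shape restriction on the rule (S1): φ is p, ⊥ or ⟨a⟩k. -/
inductive S1Form : Node P N M C → Prop where
  | prop (p : P) : S1Form (.prop p)
  | bot : S1Form .bot
  | dia (a : M) (k : N) : S1Form (.dia a (.nom k))

/-- One rule instance of the sequent calculus G: `Step cut prems concl` holds iff
    `concl` may be inferred from the premisses `prems` by a rule of G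
    (when `cut = false`, the rule (Cut) is excluded). -/
inductive Step (cut : Bool) : List (Sequent P N M C) → Sequent P N M C → Prop where
  | ax {Γ Δ : Set (Node P N M C)} {φ} (h : AxForm φ) :
      Step cut [] (insert φ Γ, insert φ Δ)
  | bot {Γ Δ : Set (Node P N M C)} (i : N) :
      Step cut [] (insert (.at i .bot) Γ, Δ)
  | implL {Γ Δ : Set (Node P N M C)} (i : N) (φ ψ : Node P N M C) :
      Step cut [(Γ, insert (.at i φ) Δ), (insert (.at i ψ) Γ, Δ)]
        (insert (.at i (.impl φ ψ)) Γ, Δ)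
  | implR {Γ Δ : Set (Node P N M C)} (i : N) (φ ψ : Node P N M C) :
      Step cut [(insert (.at i φ) Γ, insert (.at i ψ) Δ)]
        (Γ, insert (.at i (.impl φ ψ)) Δ)
  | atT {Γ Δ : Set (Node P N M C)} (i : N) :
      Step cut [(insert (.at i (.nom i)) Γ, Δ)] (Γ, Δ)
  | at5 {Γ Δ : Set (Node P N M C)} (i j k : N) :
      Step cut
        [(insert (.at j (.nom k)) (insert (.at i (.nom j)) (insert (.at i (.nom k)) Γ)), Δ)]
        (insert (.at i (.nom j)) (insert (.at i (.nom k)) Γ), Δ)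
  | nomRule {Γ Δ : Set (Node P N M C)} (i j : N)
      (hj : FreshIn j Γ) (hj' : FreshIn j Δ) :
      Step cut [(insert (.at i (.nom j)) Γ, Δ)] (Γ, Δ)
  | s1 {Γ Δ : Set (Node P N M C)} (i j : N) {φ : Node P N M C} (h : S1Form φ) :
      Step cut
        [(insert (.at j φ) (insert (.at i (.nom j)) (insert (.at i φ) Γ)), Δ)]
        (insert (.at i (.nom j)) (insert (.at i φ) Γ), Δ)
  | s2 {Γ Δ : Set (Node P N M C)} (i j k : N) (a : M) :
      Step cut
        [(insert (.at i (.dia a (.nom k)))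
            (insert (.at j (.nom k)) (insert (.at i (.dia a (.nom j))) Γ)), Δ)]
        (insert (.at j (.nom k)) (insert (.at i (.dia a (.nom j))) Γ), Δ)
  | s3 {Γ Δ : Set (Node P N M C)} (i j k : N) (c : C) :
      Step cut
        [(insert (.eq (.nom j) c (.nom k))
            (insert (.at i (.nom j)) (insert (.eq (.nom i) c (.nom k)) Γ)), Δ)]
        (insert (.at i (.nom j)) (insert (.eq (.nom i) c (.nom k)) Γ), Δ)
  | atL {Γ Δ : Set (Node P N M C)} (i j : N) (φ : Node P N M C) :
      Step cut [(insert (.at i φ) Γ, Δ)] (insert (.at j (.at i φ)) Γ, Δ)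
  | atR {Γ Δ : Set (Node P N M C)} (i j : N) (φ : Node P N M C) :
      Step cut [(Γ, insert (.at i φ) Δ)] (Γ, insert (.at j (.at i φ)) Δ)
  | diaL {Γ Δ : Set (Node P N M C)} (i j : N) (a : M) (φ : Node P N M C)
      (hj : FreshIn j (insert (.at i (.dia a φ)) Γ)) (hj' : FreshIn j Δ) :
      Step cut
        [(insert (.at i (.dia a (.nom j))) (insert (.at j φ) Γ), Δ)]
        (insert (.at i (.dia a φ)) Γ, Δ)
  | diaR {Γ Δ : Set (Node P N M C)} (i j : N) (a : M) (φ : Node P N M C) :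
      Step cut
        [(insert (.at i (.dia a (.nom j))) Γ,
          insert (.at i (.dia a φ)) (insert (.at j φ) Δ))]
        (insert (.at i (.dia a (.nom j))) Γ, insert (.at i (.dia a φ)) Δ)
  | cmpL {Γ Δ : Set (Node P N M C)} (i j k : N) (α β : Path P N M C)
      (b : Comparison C) (hjk : j ≠ k)
      (hj : FreshIn j (insert (.at i (b.node α β)) Γ)) (hj' : FreshIn j Δ)
      (hk : FreshIn k (insert (.at i (b.node α β)) Γ)) (hk' : FreshIn k Δ) :
      Step cut
        [(insert (.at i (α.dia (.nom j)))
            (insert (.at i (β.dia (.nom k)))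
              (insert (b.node (.nom j) (.nom k)) Γ)), Δ)]
        (insert (.at i (b.node α β)) Γ, Δ)
  | cmpR {Γ Δ : Set (Node P N M C)} (i j k : N) (α β : Path P N M C)
      (b : Comparison C) :
      Step cut
        [(insert (.at i (α.dia (.nom j))) (insert (.at i (β.dia (.nom k))) Γ),
          insert (.at i (b.node α β)) (insert (b.node (.nom j) (.nom k)) Δ))]
        (insert (.at i (α.dia (.nom j))) (insert (.at i (β.dia (.nom k))) Γ),
          insert (.at i (b.node α β)) Δ)
  | eqT {Γ Δ : Set (Node P N M C)} (i : N) (c : C) :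
      Step cut [(insert (.eq (.nom i) c (.nom i)) Γ, Δ)] (Γ, Δ)
  | eq5 {Γ Δ : Set (Node P N M C)} (i j k : N) (c : C) :
      Step cut
        [(insert (.eq (.nom j) c (.nom k))
            (insert (.eq (.nom i) c (.nom j)) (insert (.eq (.nom i) c (.nom k)) Γ)), Δ)]
        (insert (.eq (.nom i) c (.nom j)) (insert (.eq (.nom i) c (.nom k)) Γ), Δ)
  | neqL {Γ Δ : Set (Node P N M C)} (i j : N) (c : C) :
      Step cut [(Γ, insert (.eq (.nom i) c (.nom j)) Δ)]
        (insert (.neq (.nom i) c (.nom j)) Γ, Δ)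
  | neqR {Γ Δ : Set (Node P N M C)} (i j : N) (c : C) :
      Step cut [(insert (.eq (.nom i) c (.nom j)) Γ, Δ)]
        (Γ, insert (.neq (.nom i) c (.nom j)) Δ)
  | cutRule {Γ Δ Γ' Δ' : Set (Node P N M C)} (φ : Node P N M C)
      (ha : φ.Admissible) (hc : cut = true) :
      Step cut [(Γ, insert φ Δ), (insert φ Γ', Δ')] (Γ ∪ Γ', Δ ∪ Δ')
  | wl {Γ Δ : Set (Node P N M C)} (φ : Node P N M C) (ha : φ.Admissible) :
      Step cut [(Γ, Δ)] (insert φ Γ, Δ)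
  | wr {Γ Δ : Set (Node P N M C)} (φ : Node P N M C) (ha : φ.Admissible) :
      Step cut [(Γ, Δ)] (Γ, insert φ Δ)

/-- Derivability in G (`Deriv true`) resp. in G without (Cut) (`Deriv false`):
    a derivation built from the rules whose leaves are instances of the
    zero-premiss rules (Ax) or (⊥). -/
inductive Deriv (cut : Bool) : Sequent P N M C → Prop where
  | step {prems : List (Sequent P N M C)} {concl : Sequent P N M C}
      (h : Step cut prems concl) (ih : ∀ s ∈ prems, Deriv cut s) : Deriv cut concl

/-- Γ ⊢_G Δ : the sequent is provable in G. -/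
def ProvableG (Γ Δ : Set (Node P N M C)) : Prop := Deriv true (Γ, Δ)

/-- M ⊩ φ : global satisfaction. -/
def Model.satG (𝔐 : Model P N M C) (φ : Node P N M C) : Prop := ∀ n, 𝔐.sat φ n

/-- Validity of a sequent. -/
def ValidSeq (S : Sequent P N M C) : Prop :=
  ∀ 𝔐 : Model P N M C, (∀ γ ∈ S.1, 𝔐.satG γ) → ∃ δ ∈ S.2, 𝔐.satG δ

/-- Formulas of the basic hybrid logic H(@): no data comparisons. -/
def Node.IsHybrid : Node P N M C → Prop
  | .prop _ => True
  | .nom _ => True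
  | .bot => True
  | .impl φ ψ => φ.IsHybrid ∧ ψ.IsHybrid
  | .at _ φ => φ.IsHybrid
  | .dia _ φ => φ.IsHybrid
  | .eq _ _ _ => False
  | .neq _ _ _ => False

mutual
  theorem Path.noms_finite : ∀ α : Path P N M C, α.noms.Finite
    | .mod _ => by simp [Path.noms]
    | .nom _ => by simp [Path.noms]
    | .test φ => by simpa [Path.noms] using Node.noms_finite φ
    | .comp α β => by
        simpa [Path.noms] using (Path.noms_finite α).union (Path.noms_finite β)

  theorem Node.noms_finite : ∀ φ : Node P N M C, φ.noms.Finite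
    | .prop _ => by simp [Node.noms]
    | .nom _ => by simp [Node.noms]
    | .bot => by simp [Node.noms]
    | .impl φ ψ => by
        simpa [Node.noms] using (Node.noms_finite φ).union (Node.noms_finite ψ)
    | .at k φ => by simpa [Node.noms] using (Node.noms_finite φ).insert k
    | .dia _ φ => by simpa [Node.noms] using Node.noms_finite φ
    | .eq α _ β => by
        simpa [Node.noms] using (Path.noms_finite α).union (Path.noms_finite β)
    | .neq α _ β => by
        simpa [Node.noms] using (Path.noms_finite α).union (Path.noms_finite β)
end

theorem exists_fresh [Infinite N] (S : Set (Node P N M C)) (hS : S.Finite) :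
    ∃ j : N, FreshIn j S := by
  have hT : (⋃ φ ∈ S, Node.noms φ).Finite :=
    Set.Finite.biUnion hS fun φ _ => Node.noms_finite φ
  obtain ⟨j, hj⟩ := hT.infinite_compl.nonempty
  exact ⟨j, fun φ hφ hjn => hj (Set.mem_biUnion hφ hjn)⟩
theorem FreshIn.mono {j : N} {S S' : Set (Node P N M C)} (h : S' ⊆ S)
    (hj : FreshIn j S) : FreshIn j S' := fun φ hφ => hj φ (h hφ)

theorem identity [Infinite N] :
    ∀ (φ : Node P N M C) (i : N) (Γ Δ : Set (Node P N M C)),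
      Γ.Finite → Δ.Finite →
      Deriv true (insert (.at i φ) Γ, insert (.at i φ) Δ)
  | .prop p, i, Γ, Δ, _, _ => .step (.ax (.prop i p)) (by simp)
  | .nom k, i, Γ, Δ, _, _ => .step (.ax (.nom i k)) (by simp)
  | .bot, i, Γ, Δ, _, _ => .step (.bot i) (by simp)
  | .impl φ ψ, i, Γ, Δ, hΓ, hΔ => by
      refine Deriv.step (Step.implR i φ ψ) ?_
      intro s hs; simp only [List.mem_singleton] at hs; subst hs
      rw [Set.insert_comm]
      refine Deriv.step (Step.implL i φ ψ) ?_
      intro s hs; simp only [List.mem_cons, List.mem_singleton, List.not_mem_nil, or_false] at hs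
      rcases hs with h1 | h1 <;> subst h1
      · exact identity φ i Γ (insert _ Δ) hΓ (hΔ.insert _)
      · exact identity ψ i (insert _ Γ) Δ (hΓ.insert _) hΔ
  | .at k φ, i, Γ, Δ, hΓ, hΔ => by
      refine Deriv.step (Step.atR k i φ) ?_
      intro s hs; simp only [List.mem_singleton] at hs; subst hs
      refine Deriv.step (Step.atL k i φ) ?_
      intro s hs; simp only [List.mem_singleton] at hs; subst hs
      exact identity φ k Γ Δ hΓ hΔ
  | .dia a φ, i, Γ, Δ, hΓ, hΔ => by
      set D : Node P N M C := .at i (.dia a φ) with hD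
      obtain ⟨j, hj⟩ := exists_fresh (insert D Γ ∪ insert D Δ)
        (((hΓ.insert _).union (hΔ.insert _)))
      refine Deriv.step (Step.diaL i j a φ
        (hj.mono Set.subset_union_left) (hj.mono Set.subset_union_right)) ?_
      intro s hs; simp only [List.mem_singleton] at hs; subst hs
      refine Deriv.step (Step.diaR i j a φ) ?_
      intro s hs; simp only [List.mem_singleton] at hs; subst hs
      rw [Set.insert_comm (Node.at i (.dia a (.nom j))) (.at j φ),
        Set.insert_comm D (.at j φ)]
      exact identity φ j (insert _ Γ) (insert D Δ) (hΓ.insert _) (hΔ.insert _)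
  | .eq α c β, i, Γ, Δ, hΓ, hΔ => by
      set E : Node P N M C := .at i (.eq α c β) with hE
      obtain ⟨j, hj⟩ := exists_fresh (insert E Γ ∪ insert E Δ)
        ((hΓ.insert _).union (hΔ.insert _))
      obtain ⟨k, hk⟩ := exists_fresh (insert (.nom j) (insert E Γ ∪ insert E Δ))
        (((hΓ.insert _).union (hΔ.insert _)).insert _)
      have hjk : j ≠ k := by
        intro he; exact hk (.nom j) (Set.mem_insert _ _) (by simp [Node.noms, he])
      have hk' : FreshIn k (insert E Γ ∪ insert E Δ) :=
        hk.mono (Set.subset_insert _ _)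
      refine Deriv.step (Step.cmpL i j k α β (.ceq c) hjk
        (hj.mono Set.subset_union_left) (hj.mono Set.subset_union_right)
        (hk'.mono Set.subset_union_left) (hk'.mono Set.subset_union_right)) ?_
      intro s hs; simp only [List.mem_singleton] at hs; subst hs
      refine Deriv.step (Step.cmpR i j k α β (.ceq c)) ?_
      intro s hs; simp only [List.mem_singleton] at hs; subst hs
      have e1 : (insert (Node.at i (α.dia (.nom j)))
          (insert (.at i (β.dia (.nom k)))
            (insert (.eq (.nom j) c (.nom k)) Γ)) : Set (Node P N M C))
          = insert (.eq (.nom j) c (.nom k))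
              (insert (.at i (α.dia (.nom j))) (insert (.at i (β.dia (.nom k))) Γ)) := by
        ext x; simp only [Set.mem_insert_iff]; tauto
      have e2 : (insert ((Comparison.ceq c).node α β |>.at i)
          (insert ((Comparison.ceq c).node (.nom j) (.nom k)) Δ) : Set (Node P N M C))
          = insert (.eq (.nom j) c (.nom k)) (insert E Δ) := by
        show (insert E (insert (.eq (.nom j) c (.nom k)) Δ) : Set (Node P N M C)) = _
        ext x; simp only [Set.mem_insert_iff]; tauto
      rw [show ((Comparison.ceq c).node α β : Node P N M C) = .eq α c β from rfl]
      rw [show ((Comparison.ceq c).node (.nom j) (.nom k) : Node P N M C)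
            = .eq (.nom j) c (.nom k) from rfl]
      rw [e1]
      rw [show (insert (Node.eq α c β |>.at i) (insert (.eq (.nom j) c (.nom k)) Δ)
            : Set (Node P N M C))
          = insert (.eq (.nom j) c (.nom k)) (insert E Δ) from by
        ext x; simp only [Set.mem_insert_iff, hE]; tauto]
      exact .step (.ax (.eq j c k)) (by simp)
  | .neq α c β, i, Γ, Δ, hΓ, hΔ => by
      set E : Node P N M C := .at i (.neq α c β) with hE
      obtain ⟨j, hj⟩ := exists_fresh (insert E Γ ∪ insert E Δ)
        ((hΓ.insert _).union (hΔ.insert _))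
      obtain ⟨k, hk⟩ := exists_fresh (insert (.nom j) (insert E Γ ∪ insert E Δ))
        (((hΓ.insert _).union (hΔ.insert _)).insert _)
      have hjk : j ≠ k := by
        intro he; exact hk (.nom j) (Set.mem_insert _ _) (by simp [Node.noms, he])
      have hk' : FreshIn k (insert E Γ ∪ insert E Δ) :=
        hk.mono (Set.subset_insert _ _)
      refine Deriv.step (Step.cmpL i j k α β (.cneq c) hjk
        (hj.mono Set.subset_union_left) (hj.mono Set.subset_union_right)
        (hk'.mono Set.subset_union_left) (hk'.mono Set.subset_union_right)) ?_
      intro s hs; simp only [List.mem_singleton] at hs; subst hs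
      refine Deriv.step (Step.cmpR i j k α β (.cneq c)) ?_
      intro s hs; simp only [List.mem_singleton] at hs; subst hs
      rw [show ((Comparison.cneq c).node α β : Node P N M C) = .neq α c β from rfl]
      rw [show ((Comparison.cneq c).node (.nom j) (.nom k) : Node P N M C)
            = .neq (.nom j) c (.nom k) from rfl]
      rw [show (insert (Node.neq α c β |>.at i)
            (insert (.neq (.nom j) c (.nom k)) Δ) : Set (Node P N M C))
          = insert (.neq (.nom j) c (.nom k)) (insert E Δ) from by
        ext x; simp only [Set.mem_insert_iff, hE]; tauto]
      refine Deriv.step (Step.neqR j k c) ?_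
      intro s hs; simp only [List.mem_singleton] at hs; subst hs
      rw [show (insert (Node.eq (.nom j) c (.nom k))
            (insert (.at i (α.dia (.nom j)))
              (insert (.at i (β.dia (.nom k)))
                (insert (.neq (.nom j) c (.nom k)) Γ))) : Set (Node P N M C))
          = insert (.neq (.nom j) c (.nom k))
              (insert (.eq (.nom j) c (.nom k))
                (insert (.at i (α.dia (.nom j)))
                  (insert (.at i (β.dia (.nom k))) Γ))) from by
        ext x; simp only [Set.mem_insert_iff]; tauto]
      refine Deriv.step (Step.neqL j k c) ?_
      intro s hs; simp only [List.mem_singleton] at hs; subst hs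
      exact .step (.ax (.eq j c k)) (by simp)
/-- invertibility of (@L). -/
theorem atL_invertible {P N M C : Type} [Countable P] [Infinite P] [Countable N] [Infinite N] [Finite M] [Finite C]
    (i j : N) (φ : Node P N M C) {Γ Δ : Set (Node P N M C)}
    (hGfin : Γ.Finite) (hDfin : Δ.Finite)
    (hGadm : ∀ ψ ∈ Γ, ψ.Admissible) (hDadm : ∀ ψ ∈ Δ, ψ.Admissible)
    (h : ProvableG (insert (.at j (.at i φ)) Γ) Δ) :
    ProvableG (insert (.at i φ) Γ) Δ := by
  have hid : Deriv true (insert (.at i φ) Γ, insert (.at j (.at i φ)) Δ) := by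
    refine Deriv.step (Step.atR i j φ) ?_
    intro s hs; simp only [List.mem_singleton] at hs; subst hs
    exact identity φ i Γ Δ hGfin hDfin
  have hcut := Deriv.step (Step.cutRule (Γ := insert (.at i φ) Γ) (Δ := Δ)
      (Γ' := Γ) (Δ' := Δ) (.at j (.at i φ)) trivial rfl)
    (by
      intro s hs
      simp only [List.mem_cons, List.mem_singleton, List.not_mem_nil, or_false] at hs
      rcases hs with h1 | h1 <;> subst h1
      · exact hid
      · exact h)
  have e : (insert (Node.at i φ) Γ ∪ Γ : Set (Node P N M C)) = insert (.at i φ) Γ := by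
    ext x; simp only [Set.mem_union, Set.mem_insert_iff]; tauto
  rwa [e, Set.union_self] at hcut

end HXPathD
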